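/- If H is a multigraph that is not Mengerian for time and H is an m-topological minor of a multigraph G, then G is not Mengerian for time. -/

import Mathlib

/-- A (finite, loopless) multigraph: a vertex type, an edge type, and an
endpoints function assigning to each edge an unordered pair of distinct vertices. -/
structure Multigraph where
  V : Type
  E : Type
  fintypeV : Fintype V
  decEqV : DecidableEq V
  fintypeE : Fintype E
  decEqE : DecidableEq E
  ends : E → Sym2 V
  loopless : ∀ e, ¬ (ends e).IsDiag

attribute [instance] Multigraph.fintypeV Multigraph.decEqV Multigraph.fintypeE Multigraph.decEqE

/-- A temporal `s,z`-path in the temporal graph `(G, lam)`: an alternating sequence of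
pairwise distinct vertices and edges, starting at `s`, ending at `z`, whose edges appear
at non-decreasing timesteps. -/
structure TPath (G : Multigraph) (lam : G.E → ℕ) (s z : G.V) where
  verts : List G.V
  edges : List G.E
  len_eq : verts.length = edges.length + 1
  head_eq : verts.head? = some s
  last_eq : verts.getLast? = some z
  nodup : verts.Nodup
  ends_eq : ∀ (i : ℕ) (h : i < edges.length),
      G.ends (edges.get ⟨i, h⟩) = s(verts.get ⟨i, by omega⟩, verts.get ⟨i + 1, by omega⟩)
  mono : List.Chain' (· ≤ ·) (edges.map lam)

/-- The set of timesteps at which a temporal path is active. -/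
def TPath.times {G : Multigraph} {lam : G.E → ℕ} {s z : G.V} (P : TPath G lam s z) : Set ℕ :=
  {t | ∃ e ∈ P.edges, lam e = t}

/-- Two temporal `s,z`-paths are snapshot disjoint if they are not both active at any
common timestep. -/
def SnapDisjoint {G : Multigraph} {lam : G.E → ℕ} {s z : G.V} (P Q : TPath G lam s z) : Prop :=
  P.times ∩ Q.times = ∅

/-- A set `S` of timesteps is a snapshot `s,z`-cut if every temporal `s,z`-path uses an
edge active at some timestep in `S`. -/
def IsSnapCut (G : Multigraph) (lam : G.E → ℕ) (s z : G.V) (S : Set ℕ) : Prop :=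
  ∀ P : TPath G lam s z, ∃ e ∈ P.edges, lam e ∈ S

/-- `maxD G lam s z`: the maximum number of pairwise snapshot disjoint temporal `s,z`-paths. -/
noncomputable def maxD (G : Multigraph) (lam : G.E → ℕ) (s z : G.V) : ℕ :=
  sSup {k | ∃ f : Fin k → TPath G lam s z, ∀ i j, i ≠ j → SnapDisjoint (f i) (f j)}

/-- `minC G lam s z`: the minimum size of a snapshot `s,z`-cut. -/
noncomputable def minC (G : Multigraph) (lam : G.E → ℕ) (s z : G.V) : ℕ :=
  sInf {h | ∃ S : Finset ℕ, S.card = h ∧ IsSnapCut G lam s z ↑S}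

/-- A proper timefunction: each edge is active at a positive timestep, and no two parallel
edges are active at the same timestep. -/
def ProperTime (G : Multigraph) (lam : G.E → ℕ) : Prop :=
  (∀ e, 0 < lam e) ∧ ∀ e f, e ≠ f → G.ends e = G.ends f → lam e ≠ lam f

/-- `G` is Mengerian for time: for every proper timefunction and every pair of distinct
vertices, the maximum number of pairwise snapshot disjoint temporal `s,z`-paths equals the
minimum size of a snapshot `s,z`-cut. -/
def Mengerian (G : Multigraph) : Prop :=
  ∀ lam : G.E → ℕ, ProperTime G lam → ∀ s z : G.V, s ≠ z →
    maxD G lam s z = minC G lam s z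

/-- `H` is a subgraph of `G` (up to isomorphism): `H` embeds into `G`. -/
def IsSubgraph (H G : Multigraph) : Prop :=
  ∃ (fv : H.V → G.V) (fe : H.E → G.E),
    Function.Injective fv ∧ Function.Injective fe ∧
    ∀ e, G.ends (fe e) = (H.ends e).map fv

/-- The m-subdivision of the multiedge `xy` of `G`: delete all edges between `x` and `y`,
add a new vertex (`none`), and join it to each of `x` and `y` by as many parallel edges as
there were between `x` and `y`. -/
def Multigraph.msubdiv (G : Multigraph) (x y : G.V) : Multigraph where
  V := Option G.V
  E := {e : G.E // G.ends e ≠ s(x, y)} ⊕ ({e : G.E // G.ends e = s(x, y)} × Bool)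
  fintypeV := inferInstance
  decEqV := inferInstance
  fintypeE := inferInstance
  decEqE := inferInstance
  ends := fun t =>
    match t with
    | .inl e => (G.ends e.1).map some
    | .inr (_, true) => s(some x, (none : Option G.V))
    | .inr (_, false) => s((none : Option G.V), some y)
  loopless := by
    rintro (⟨e, he⟩ | ⟨e, b⟩)
    · simpa [Sym2.isDiag_map (Option.some_injective _)] using G.loopless e
    · cases b <;> simp [Sym2.mk_isDiag_iff]

/-- Isomorphism of multigraphs. -/
def MIso (G H : Multigraph) : Prop :=
  ∃ (fv : G.V ≃ H.V) (fe : G.E ≃ H.E), ∀ e, H.ends (fe e) = (G.ends e).map fv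

/-- `B` is obtained from `A` by m-subdividing one of its multiedges. -/
def SubdivStep (A B : Multigraph) : Prop :=
  ∃ x y : A.V, (∃ e, A.ends e = s(x, y)) ∧ MIso (A.msubdiv x y) B

/-- `H` is an m-topological minor of `G`: some subgraph of `G` can be obtained from `H` by
a sequence of m-subdivisions. -/
def IsMTopMinor (H G : Multigraph) : Prop :=
  ∃ K, Relation.ReflTransGen SubdivStep H K ∧ IsSubgraph K G

/-- The multigraph obtained from `G` by keeping only the edges satisfying `P`. -/
def Multigraph.restrictE (G : Multigraph) (P : G.E → Prop) [DecidablePred P] : Multigraph where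
  V := G.V
  E := {e : G.E // P e}
  fintypeV := G.fintypeV
  decEqV := G.decEqV
  fintypeE := inferInstance
  decEqE := inferInstance
  ends := fun e => G.ends e.1
  loopless := fun e => G.loopless e.1

attribute [reducible] Multigraph.restrictE
attribute [reducible] Multigraph.msubdiv

/-- The underlying simple graph of a multigraph. -/
def Multigraph.simple (G : Multigraph) : SimpleGraph G.V where
  Adj u v := ∃ e, G.ends e = s(u, v)
  symm := by
    constructor
    rintro u v ⟨e, he⟩
    exact ⟨e, by rw [he, Sym2.eq_swap]⟩
  loopless := by
    constructor
    rintro u ⟨e, he⟩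
    exact G.loopless e (by rw [he]; exact Sym2.mk_isDiag_iff.2 rfl)


namespace TProof
open List

/-- The alternating-walk shape predicate. -/
def Okl (G : Multigraph) : List G.V → List G.E → Prop
  | [_], [] => True
  | u :: v :: vs, e :: es => G.ends e = s(u, v) ∧ Okl G (v :: vs) es
  | _, _ => False

lemma okl_of_forall (G : Multigraph) : ∀ (es : List G.E) (vs : List G.V)
    (hlen : vs.length = es.length + 1),
    (∀ (i : ℕ) (hi : i < es.length),
      G.ends (es.get ⟨i, hi⟩) = s(vs.get ⟨i, by omega⟩, vs.get ⟨i+1, by omega⟩)) →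
    Okl G vs es
  | [], [v], _, _ => trivial
  | e :: es, u :: v :: vs, hlen, h => by
    refine ⟨by simpa using h 0 (by simp), okl_of_forall G es (v :: vs) (by simpa using hlen) ?_⟩
    intro i hi
    simpa using h (i+1) (by simpa using Nat.succ_lt_succ hi)
  | [], [], hlen, _ => by simp at hlen
  | [], _ :: _ :: _, hlen, _ => by simp at hlen
  | _ :: _, [], hlen, _ => by simp at hlen
  | _ :: _, [_], hlen, _ => by simp at hlen

lemma forall_of_okl (G : Multigraph) : ∀ (es : List G.E) (vs : List G.V),
    Okl G vs es →
    ∀ (i : ℕ) (hi : i < es.length) (h1 : i < vs.length) (h2 : i + 1 < vs.length),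
      G.ends (es.get ⟨i, hi⟩) = s(vs.get ⟨i, h1⟩, vs.get ⟨i+1, h2⟩)
  | [], [v], _, i, hi => by simp at hi
  | e :: es, u :: v :: vs, h, 0, hi => fun h1 h2 => h.1
  | e :: es, u :: v :: vs, h, (i+1), hi => fun h1 h2 => by
    simpa using forall_of_okl G es (v :: vs) h.2 i (by simpa using hi)
      (by simpa using h1) (by simpa using h2)
  | [], [], h, _, _ => h.elim
  | [], _ :: _ :: _, h, _, _ => h.elim
  | _ :: _, [], h, _, _ => h.elim
  | _ :: _, [_], h, _, _ => h.elim

lemma okl_length {G : Multigraph} : ∀ {es : List G.E} {vs : List G.V},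
    Okl G vs es → vs.length = es.length + 1
  | [], [v], _ => rfl
  | e :: es, u :: v :: vs, h => by
    have := okl_length (G := G) h.2; simpa using this
  | [], [], h => h.elim
  | [], _ :: _ :: _, h => h.elim
  | _ :: _, [], h => h.elim
  | _ :: _, [_], h => h.elim

variable {G : Multigraph} {lam : G.E → ℕ} {s z : G.V}

lemma _root_.TPath.ok (P : TPath G lam s z) : Okl G P.verts P.edges :=
  okl_of_forall G P.edges P.verts P.len_eq (fun i hi => P.ends_eq i hi)

/-- Constructor from Okl data. -/
def mkT (vs : List G.V) (es : List G.E) (hok : Okl G vs es)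
    (hh : vs.head? = some s) (hl : vs.getLast? = some z) (hnd : vs.Nodup)
    (hch : List.Chain' (· ≤ ·) (es.map lam)) : TPath G lam s z where
  verts := vs
  edges := es
  len_eq := okl_length hok
  head_eq := hh
  last_eq := hl
  nodup := hnd
  ends_eq := fun i hi => forall_of_okl G es vs hok i hi
      (by have := okl_length hok; omega) (by have := okl_length hok; omega)
  mono := hch

lemma _root_.TPath.verts_ne_nil (P : TPath G lam s z) : P.verts ≠ [] := by
  have := P.len_eq; intro h; rw [h] at this; simp at this

lemma _root_.TPath.edges_ne_nil (hsz : s ≠ z) (P : TPath G lam s z) : P.edges ≠ [] := by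
  intro h
  have hlen := P.len_eq
  rw [h] at hlen; simp at hlen
  obtain ⟨v, hv⟩ := List.length_eq_one_iff.1 hlen
  have h1 := P.head_eq; have h2 := P.last_eq
  rw [hv] at h1 h2; simp at h1 h2; exact hsz (h1.symm.trans h2)

lemma _root_.TPath.times_nonempty (hsz : s ≠ z) (P : TPath G lam s z) : P.times.Nonempty :=
  ⟨lam (P.edges.head (P.edges_ne_nil hsz)),
    ⟨_, List.head_mem _, rfl⟩⟩

lemma snapDisjoint_iff {P Q : TPath G lam s z} :
    SnapDisjoint P Q ↔ ∀ t, t ∈ P.times → t ∉ Q.times := by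
  unfold SnapDisjoint
  rw [Set.eq_empty_iff_forall_notMem]
  constructor
  · intro h t ht ht'; exact h t ⟨ht, ht'⟩
  · rintro h t ⟨ht, ht'⟩; exact h t ht ht'

lemma maxD_bddAbove (hsz : s ≠ z) :
    BddAbove {k | ∃ f : Fin k → TPath G lam s z, ∀ i j, i ≠ j → SnapDisjoint (f i) (f j)} := by
  refine ⟨Fintype.card G.E, ?_⟩
  rintro k ⟨f, hf⟩
  have : Function.Injective (fun i : Fin k => (f i).edges.head ((f i).edges_ne_nil hsz)) := by
    intro i j hij
    by_contra hne
    have hd := hf i j hne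
    rw [snapDisjoint_iff] at hd
    refine hd (lam ((f i).edges.head ((f i).edges_ne_nil hsz))) ⟨_, List.head_mem _, rfl⟩ ?_
    exact ⟨_, List.head_mem _, congrArg lam hij.symm⟩
  simpa using Fintype.card_le_of_injective _ this

lemma le_maxD (hsz : s ≠ z) {k : ℕ} (f : Fin k → TPath G lam s z)
    (hf : ∀ i j, i ≠ j → SnapDisjoint (f i) (f j)) : k ≤ maxD G lam s z :=
  le_csSup (maxD_bddAbove hsz) ⟨f, hf⟩

lemma maxD_set_nonempty :
    Set.Nonempty {k | ∃ f : Fin k → TPath G lam s z, ∀ i j, i ≠ j → SnapDisjoint (f i) (f j)} :=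
  ⟨0, Fin.elim0, fun i => i.elim0⟩

lemma exists_max_family (hsz : s ≠ z) :
    ∃ f : Fin (maxD G lam s z) → TPath G lam s z, ∀ i j, i ≠ j → SnapDisjoint (f i) (f j) :=
  Nat.sSup_mem maxD_set_nonempty (maxD_bddAbove hsz)

lemma maxD_le {n : ℕ}
    (h : ∀ k, ∀ f : Fin k → TPath G lam s z,
      (∀ i j, i ≠ j → SnapDisjoint (f i) (f j)) → k ≤ n) :
    maxD G lam s z ≤ n :=
  csSup_le maxD_set_nonempty (by rintro k ⟨f, hf⟩; exact h k f hf)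

lemma minC_le {S : Finset ℕ} (hS : IsSnapCut G lam s z ↑S) : minC G lam s z ≤ S.card :=
  Nat.sInf_le ⟨S, rfl, hS⟩

lemma exists_min_cut (hsz : s ≠ z) :
    ∃ S : Finset ℕ, S.card = minC G lam s z ∧ IsSnapCut G lam s z ↑S := by
  have hne : Set.Nonempty {h | ∃ S : Finset ℕ, S.card = h ∧ IsSnapCut G lam s z ↑S} := by
    refine ⟨_, Finset.image lam Finset.univ, rfl, fun P => ?_⟩
    exact ⟨P.edges.head (P.edges_ne_nil hsz), List.head_mem _, by simp⟩
  exact Nat.sInf_mem hne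

section Transfer

variable {G₁ G₂ : Multigraph} {lam₁ : G₁.E → ℕ} {lam₂ : G₂.E → ℕ}
  {s₁ z₁ : G₁.V} {s₂ z₂ : G₂.V}

lemma maxD_le_maxD (h2 : s₂ ≠ z₂)
    (Φ : TPath G₁ lam₁ s₁ z₁ → TPath G₂ lam₂ s₂ z₂)
    (hd : ∀ P Q, P.times ∩ Q.times = ∅ → (Φ P).times ∩ (Φ Q).times = ∅) :
    maxD G₁ lam₁ s₁ z₁ ≤ maxD G₂ lam₂ s₂ z₂ := by
  refine maxD_le (fun k f hf => le_maxD h2 (Φ ∘ f) ?_)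
  intro i j hij
  exact hd _ _ (hf i j hij)

lemma minC_le_minC (h2 : s₂ ≠ z₂)
    (hcut : ∀ S : Finset ℕ, IsSnapCut G₂ lam₂ s₂ z₂ ↑S →
      ∃ S' : Finset ℕ, S'.card ≤ S.card ∧ IsSnapCut G₁ lam₁ s₁ z₁ ↑S') :
    minC G₁ lam₁ s₁ z₁ ≤ minC G₂ lam₂ s₂ z₂ := by
  obtain ⟨S, hcard, hS⟩ := exists_min_cut h2 (G := G₂) (lam := lam₂)
  obtain ⟨S', hle, hS'⟩ := hcut S hS
  exact le_trans (minC_le hS') (hcard ▸ hle)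

lemma cut_pullback (Φ : TPath G₁ lam₁ s₁ z₁ → TPath G₂ lam₂ s₂ z₂) (ρ : ℕ → ℕ)
    (hρ : ∀ P : TPath G₁ lam₁ s₁ z₁, ∀ t ∈ (Φ P).times, ρ t ∈ P.times)
    (S : Finset ℕ) (hS : IsSnapCut G₂ lam₂ s₂ z₂ ↑S) :
    ∃ S' : Finset ℕ, S'.card ≤ S.card ∧ IsSnapCut G₁ lam₁ s₁ z₁ ↑S' := by
  refine ⟨S.image ρ, Finset.card_image_le, fun P => ?_⟩
  obtain ⟨e, he, heS⟩ := hS (Φ P)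
  obtain ⟨e', he', he't⟩ := hρ P (lam₂ e) ⟨e, he, rfl⟩
  exact ⟨e', he', by rw [he't]; exact Finset.mem_coe.2 (Finset.mem_image_of_mem ρ heS)⟩

end Transfer

section Push

variable {A B : Multigraph} {lamA : A.E → ℕ} {lamB : B.E → ℕ} {s z : A.V}

lemma okl_map (mv : A.V → B.V) (me : A.E → B.E)
    (hends : ∀ e, B.ends (me e) = (A.ends e).map mv) :
    ∀ (es : List A.E) (vs : List A.V), Okl A vs es → Okl B (vs.map mv) (es.map me)
  | [], [v], _ => trivial
  | e :: es, u :: v :: vs, h => by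
    refine ⟨?_, okl_map mv me hends es (v :: vs) h.2⟩
    rw [hends, h.1, Sym2.map_pair_eq]
  | [], [], h => h.elim
  | [], _ :: _ :: _, h => h.elim
  | _ :: _, [], h => h.elim
  | _ :: _, [_], h => h.elim

/-- Pushforward of a temporal path along a pair of maps. -/
def pushT (mv : A.V → B.V) (me : A.E → B.E)
    (hends : ∀ e, B.ends (me e) = (A.ends e).map mv)
    (θ : ℕ → ℕ) (hθ : Monotone θ) (hlam : ∀ e, lamB (me e) = θ (lamA e))
    (P : TPath A lamA s z)
    (hinj : ∀ a ∈ P.verts, ∀ b ∈ P.verts, mv a = mv b → a = b) :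
    TPath B lamB (mv s) (mv z) :=
  mkT (P.verts.map mv) (P.edges.map me)
    (okl_map mv me hends _ _ P.ok)
    (by rw [List.head?_map, P.head_eq]; rfl)
    (by rw [List.getLast?_map, P.last_eq]; rfl)
    (P.nodup.map_on hinj)
    (by
      have : (P.edges.map me).map lamB = (P.edges.map lamA).map θ := by
        simp [List.map_map, Function.comp_def, hlam]
      rw [this]
      exact (List.isChain_map θ).2 (P.mono.imp (fun {a b} h => hθ h)))

lemma pushT_times (mv : A.V → B.V) (me : A.E → B.E)
    (hends : ∀ e, B.ends (me e) = (A.ends e).map mv)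
    (θ : ℕ → ℕ) (hθ : Monotone θ) (hlam : ∀ e, lamB (me e) = θ (lamA e))
    (P : TPath A lamA s z) (hinj) :
    (pushT mv me hends θ hθ hlam P hinj).times = θ '' P.times := by
  ext t
  constructor
  · rintro ⟨e, he, rfl⟩
    rw [pushT] at he
    simp only [mkT, List.mem_map] at he
    obtain ⟨e', he', rfl⟩ := he
    exact ⟨lamA e', ⟨e', he', rfl⟩, (hlam e').symm⟩
  · rintro ⟨t', ⟨e, he, rfl⟩, rfl⟩
    exact ⟨me e, by rw [pushT]; simpa [mkT] using List.mem_map_of_mem (f := me) he, hlam e⟩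

lemma okl_pmap (Q : A.E → Prop) [DecidablePred Q] :
    ∀ (es : List A.E) (vs : List A.V) (hmem : ∀ e ∈ es, Q e), Okl A vs es →
      Okl (A.restrictE Q) vs (es.pmap Subtype.mk hmem)
  | [], [v], _, _ => trivial
  | e :: es, u :: v :: vs, hmem, h =>
    ⟨h.1, okl_pmap Q es (v :: vs) (fun e' he' => hmem e' (List.mem_cons_of_mem _ he')) h.2⟩
  | [], [], _, h => h.elim
  | [], _ :: _ :: _, _, h => h.elim
  | _ :: _, [], _, h => h.elim
  | _ :: _, [_], _, h => h.elim

/-- Pullback of a temporal path to an edge-restricted multigraph. -/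
def pullT (Q : A.E → Prop) [DecidablePred Q] (lamQ : (A.restrictE Q).E → ℕ)
    (θ : ℕ → ℕ) (hθ : Monotone θ) (hlam : ∀ e (h : Q e), lamQ ⟨e, h⟩ = θ (lamA e))
    (P : TPath A lamA s z) (hmem : ∀ e ∈ P.edges, Q e) :
    TPath (A.restrictE Q) lamQ s z :=
  mkT P.verts (P.edges.pmap Subtype.mk hmem)
    (okl_pmap Q _ _ hmem P.ok) P.head_eq P.last_eq P.nodup
    (by
      have : (P.edges.pmap Subtype.mk hmem).map lamQ = (P.edges.map lamA).map θ := by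
        rw [List.map_pmap]
        simp only [hlam, List.map_map]
        rw [List.pmap_eq_map]
        simp [Function.comp_def]
      rw [this]
      exact (List.isChain_map θ).2 (P.mono.imp (fun {a b} h => hθ h)))

lemma pullT_times (Q : A.E → Prop) [DecidablePred Q] (lamQ : (A.restrictE Q).E → ℕ)
    (θ : ℕ → ℕ) (hθ : Monotone θ) (hlam : ∀ e (h : Q e), lamQ ⟨e, h⟩ = θ (lamA e))
    (P : TPath A lamA s z) (hmem : ∀ e ∈ P.edges, Q e) :
    (pullT Q lamQ θ hθ hlam P hmem).times = θ '' P.times := by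
  ext t
  constructor
  · rintro ⟨e, he, rfl⟩
    rw [pullT] at he
    simp only [mkT, List.mem_pmap] at he
    obtain ⟨e', he', rfl⟩ := he
    exact ⟨lamA e', ⟨e', he', rfl⟩, (hlam e' _).symm⟩
  · rintro ⟨t', ⟨e, he, rfl⟩, rfl⟩
    refine ⟨⟨e, hmem e he⟩, ?_, hlam e _⟩
    rw [pullT]; simp only [mkT, List.mem_pmap]
    exact ⟨e, he, rfl⟩

lemma okl_mem :
    ∀ (es : List A.E) (vs : List A.V), Okl A vs es → ∀ v ∈ vs,
      vs.head? = some v ∨ ∃ e ∈ es, v ∈ A.ends e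
  | [], [v], _ => by intro w hw; left; simp at hw; simp [hw]
  | e :: es, u :: v :: vs, h => by
    intro w hw
    rcases List.mem_cons.1 hw with rfl | hw'
    · left; rfl
    · rcases okl_mem es (v :: vs) h.2 w hw' with hh | ⟨e', he', hm⟩
      · right; refine ⟨e, List.mem_cons_self, ?_⟩
        simp at hh
        rw [h.1, ← hh]; simp
      · exact Or.inr ⟨e', List.mem_cons_of_mem _ he', hm⟩
  | [], [], h => h.elim
  | [], _ :: _ :: _, h => h.elim
  | _ :: _, [], h => h.elim
  | _ :: _, [_], h => h.elim

lemma _root_.TPath.vert_cases (P : TPath A lamA s z) :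
    ∀ v ∈ P.verts, v = s ∨ ∃ e ∈ P.edges, v ∈ A.ends e := by
  intro v hv
  rcases okl_mem P.edges P.verts P.ok v hv with hh | h
  · left; have := P.head_eq; rw [hh] at this; exact Option.some_inj.1 this
  · exact Or.inr h

end Push

section IsoTrans

/-- Cast a temporal path along endpoint equalities. -/
def castT {A : Multigraph} {lamA : A.E → ℕ} {s z s' z' : A.V}
    (hs : s = s') (hz : z = z') (P : TPath A lamA s z) : TPath A lamA s' z' :=
  ⟨P.verts, P.edges, P.len_eq, hs ▸ P.head_eq, hz ▸ P.last_eq, P.nodup, P.ends_eq, P.mono⟩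

@[simp] lemma castT_times {A : Multigraph} {lamA : A.E → ℕ} {s z s' z' : A.V}
    (hs : s = s') (hz : z = z') (P : TPath A lamA s z) :
    (castT hs hz P).times = P.times := rfl

@[simp] lemma castT_edges {A : Multigraph} {lamA : A.E → ℕ} {s z s' z' : A.V}
    (hs : s = s') (hz : z = z') (P : TPath A lamA s z) :
    (castT hs hz P).edges = P.edges := rfl

lemma inter_image_empty (θ : ℕ → ℕ) {S T : Set ℕ} (hinj : Set.InjOn θ (S ∪ T))
    (h : S ∩ T = ∅) : (θ '' S) ∩ (θ '' T) = ∅ := by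
  ext t
  simp only [Set.mem_inter_iff, Set.mem_image, Set.mem_empty_iff_false, iff_false, not_and]
  rintro ⟨a, ha, rfl⟩ ⟨b, hb, hba⟩
  have hab : b = a := hinj (Or.inr hb) (Or.inl ha) hba
  subst hab
  have := Set.eq_empty_iff_forall_notMem.1 h b
  exact this ⟨ha, hb⟩

lemma sym2_map_equiv_cancel {α β : Type} (f : α ≃ β) (σ : Sym2 α) :
    (σ.map f).map f.symm = σ := by
  rw [Sym2.map_map]
  simp [Function.comp_def]

lemma meng_of_miso {A B : Multigraph} (hiso : MIso A B) (hB : Mengerian B) : Mengerian A := by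
  obtain ⟨fv, fe, hends⟩ := hiso
  intro lamA hproper s z hsz
  set lamB : B.E → ℕ := lamA ∘ fe.symm with hlamB
  have hlam1 : ∀ e, lamB (fe e) = id (lamA e) := by intro e; simp [hlamB]
  have hends' : ∀ ε, A.ends (fe.symm ε) = (B.ends ε).map fv.symm := by
    intro ε
    rw [← sym2_map_equiv_cancel fv (A.ends (fe.symm ε)), ← hends, Equiv.apply_symm_apply]
  have hlam2 : ∀ ε, lamA (fe.symm ε) = id (lamB ε) := by intro ε; simp [hlamB]
  have hproperB : ProperTime B lamB := by
    constructor
    · intro e; exact hproper.1 _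
    · intro e f hef hendsef
      have h1 : A.ends (fe.symm e) = A.ends (fe.symm f) := by
        rw [hends' e, hends' f, hendsef]
      exact hproper.2 _ _ (fun h => hef (by simpa using congrArg fe h)) h1
  have hBsz : fv s ≠ fv z := fun h => hsz (fv.injective h)
  have hmain := hB lamB hproperB (fv s) (fv z) hBsz
  -- the two path transformations
  have hinjv : ∀ (P : TPath A lamA s z), ∀ a ∈ P.verts, ∀ b ∈ P.verts, fv a = fv b → a = b :=
    fun _ a _ b _ h => fv.injective h
  set Φ : TPath A lamA s z → TPath B lamB (fv s) (fv z) :=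
    fun P => pushT fv fe hends id monotone_id hlam1 P (hinjv P) with hΦ
  have hΦt : ∀ P, (Φ P).times = P.times := by
    intro P; rw [hΦ]; simp only []; rw [pushT_times]; exact Set.image_id _
  set Ψ : TPath B lamB (fv s) (fv z) → TPath A lamA s z :=
    fun P => castT (fv.symm_apply_apply s) (fv.symm_apply_apply z)
      (pushT fv.symm fe.symm hends' id monotone_id hlam2 P
        (fun a _ b _ h => fv.symm.injective h)) with hΨ
  have hΨt : ∀ P, (Ψ P).times = P.times := by
    intro P; rw [hΨ]; simp only [castT_times]; rw [pushT_times]; exact Set.image_id _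
  have e1 : maxD A lamA s z = maxD B lamB (fv s) (fv z) := by
    apply _root_.le_antisymm
    · exact maxD_le_maxD hBsz Φ (fun P Q h => by rw [hΦt, hΦt]; exact h)
    · exact maxD_le_maxD hsz Ψ (fun P Q h => by rw [hΨt, hΨt]; exact h)
  have e2 : minC A lamA s z = minC B lamB (fv s) (fv z) := by
    apply _root_.le_antisymm
    · refine minC_le_minC hBsz (cut_pullback Φ id ?_)
      intro P t ht; rw [hΦt] at ht; exact ht
    · refine minC_le_minC hsz (cut_pullback Ψ id ?_)
      intro P t ht; rw [hΨt] at ht; exact ht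
  rw [e1, e2, hmain]

end IsoTrans

section DelOne

variable {A : Multigraph} {lamA : A.E → ℕ} {s z : A.V}

lemma get_zero_of_head? {α : Type} : ∀ (l : List α) (h0 : 0 < l.length) (a : α),
    l.head? = some a → l.get ⟨0, h0⟩ = a
  | [], h0, a => by simp at h0
  | b :: t, _, a => by intro h; simpa using h

lemma _root_.TPath.get_head (P : TPath A lamA s z) (h0 : 0 < P.verts.length) :
    P.verts.get ⟨0, h0⟩ = s :=
  get_zero_of_head? _ h0 s P.head_eq

lemma _root_.TPath.get_last (P : TPath A lamA s z)
    (h0 : P.verts.length - 1 < P.verts.length) :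
    P.verts.get ⟨P.verts.length - 1, h0⟩ = z := by
  have h := P.last_eq
  rw [List.getLast?_eq_getLast P.verts_ne_nil] at h
  rw [← Option.some_inj, ← h]
  congr 1
  exact (List.getLast_eq_getElem _).symm

lemma get_idx_congr {α : Type} (l : List α) {i j : ℕ} (hi : i < l.length) (hj : j < l.length)
    (h : i = j) : l.get ⟨i, hi⟩ = l.get ⟨j, hj⟩ := by subst h; rfl

lemma _root_.TPath.adj_ne (P : TPath A lamA s z) (j : ℕ) (hj : j + 1 < P.edges.length) :
    P.edges.get ⟨j, by omega⟩ ≠ P.edges.get ⟨j + 1, hj⟩ := by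
  intro hEq
  have hlen := P.len_eq
  have h1 := P.ends_eq j (by omega)
  have h2 := P.ends_eq (j+1) hj
  rw [hEq] at h1
  rw [h1] at h2
  rw [Sym2.eq_iff] at h2
  have hinj := P.nodup.get_inj_iff (i := ⟨j, by omega⟩) (j := ⟨j+2, by omega⟩)
  have hinj2 := P.nodup.get_inj_iff (i := ⟨j, by omega⟩) (j := ⟨j+1, by omega⟩)
  rcases h2 with ⟨ha, hb⟩ | ⟨ha, hb⟩
  · have := hinj2.1 ha; simp at this
  · have := hinj.1 ha; simp at this

lemma _root_.TPath.chain_le (P : TPath A lamA s z) (j : ℕ) (hj : j + 1 < P.edges.length) :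
    lamA (P.edges.get ⟨j, by omega⟩) ≤ lamA (P.edges.get ⟨j+1, hj⟩) := by
  have := List.isChain_iff_getElem.1 P.mono j (by simp; omega)
  simpa using this

/-- An edge with strictly maximal timestep not incident to `z` is unusable. -/
lemma not_mem_of_strict_max (e0 : A.E) (hmax : ∀ e, e ≠ e0 → lamA e < lamA e0)
    (hz : z ∉ A.ends e0) (P : TPath A lamA s z) : e0 ∉ P.edges := by
  intro hmem
  obtain ⟨⟨i, hi⟩, hei⟩ := List.mem_iff_get.1 hmem
  have hlast : i = P.edges.length - 1 := by
    by_contra hne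
    have hi1 : i + 1 < P.edges.length := by omega
    have hne2 : P.edges.get ⟨i+1, hi1⟩ ≠ e0 := by
      intro h; exact P.adj_ne i hi1 (hei.trans h.symm)
    have := P.chain_le i hi1
    rw [hei] at this
    exact absurd this (not_le.2 (hmax _ hne2))
  subst hlast
  have hlen := P.len_eq
  have hi' : P.edges.length - 1 < P.edges.length := hi
  have hee := P.ends_eq (P.edges.length - 1) hi'
  rw [hei] at hee
  have hz' : P.verts.get ⟨P.edges.length - 1 + 1, by omega⟩ = z := by
    have h2 := P.get_last (by omega)
    exact (get_idx_congr _ _ _ (by omega)).trans h2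
  rw [hz'] at hee
  exact hz (by rw [hee]; simp)

/-- An edge with strictly minimal timestep not incident to `s` is unusable. -/
lemma not_mem_of_strict_min (e0 : A.E) (hmin : ∀ e, e ≠ e0 → lamA e0 < lamA e)
    (hs : s ∉ A.ends e0) (P : TPath A lamA s z) : e0 ∉ P.edges := by
  intro hmem
  obtain ⟨⟨i, hi⟩, hei⟩ := List.mem_iff_get.1 hmem
  have hfirst : i = 0 := by
    by_contra hne
    have hi1 : (i - 1) + 1 < P.edges.length := by omega
    have hne2 : P.edges.get ⟨i - 1, by omega⟩ ≠ e0 := by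
      intro h
      exact P.adj_ne (i-1) hi1 (h.trans ((get_idx_congr _ _ _ (by omega)).trans hei).symm)
    have := P.chain_le (i-1) hi1
    have heq : P.edges.get ⟨i - 1 + 1, hi1⟩ = e0 := (get_idx_congr _ _ _ (by omega)).trans hei
    rw [heq] at this
    exact absurd this (not_le.2 (hmin _ hne2))
  subst hfirst
  have hee := P.ends_eq 0 hi
  rw [hei] at hee
  rw [P.get_head] at hee
  exact hs (by rw [hee]; simp)

end DelOne

section MengDel

lemma meng_delone {A : Multigraph} (e0 : A.E) (hA : Mengerian A) :
    Mengerian (A.restrictE (fun e => ¬ (e = e0))) := by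
  intro lam hproper s z hsz
  have hendsv : ∀ ε : (A.restrictE (fun e => ¬ (e = e0))).E,
      A.ends ε.val = ((A.restrictE (fun e => ¬ (e = e0))).ends ε).map id := by
    intro ε; rw [Sym2.map_id]; rfl
  by_cases hzend : z ∈ A.ends e0
  case neg =>
    -- give e0 a strictly maximal time; it becomes unusable
    set M : ℕ := (Finset.univ.sup fun ε : (A.restrictE (fun e => ¬ (e = e0))).E => lam ε) + 1
      with hM
    set lamA : A.E → ℕ := fun e => if h : e = e0 then M else lam ⟨e, h⟩ with hlamA
    have he0 : lamA e0 = M := by simp [hlamA]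
    have hval : ∀ (e : A.E) (he : ¬ (e = e0)), lamA e = lam ⟨e, he⟩ := by
      intro e he; simp only [hlamA]; rw [dif_neg he]
    have hltM : ∀ (e : A.E) (he : ¬ (e = e0)), lamA e < M := by
      intro e he; rw [hval e he]
      have h5 : lam ⟨e, he⟩ ≤ Finset.univ.sup
          (fun ε : (A.restrictE (fun e => ¬ (e = e0))).E => lam ε) :=
        Finset.le_sup (Finset.mem_univ _)
      omega
    have hmax : ∀ e, e ≠ e0 → lamA e < lamA e0 := by
      intro e he; rw [he0]; exact hltM e he
    have hproperA : ProperTime A lamA := by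
      constructor
      · intro e
        by_cases h : e = e0
        · subst h; rw [he0]; omega
        · have h1 : 0 < lam ⟨e, h⟩ := hproper.1 _
          rw [hval e h]; exact h1
      · intro e f hef hends
        by_cases he : e = e0
        · subst he; intro h; have := hmax f (fun hh => hef hh.symm); omega
        · by_cases hf : f = e0
          · subst hf; intro h; have := hmax e he; omega
          · rw [hval e he, hval f hf]
            exact hproper.2 ⟨e, he⟩ ⟨f, hf⟩
              (fun h => hef (congrArg Subtype.val h)) hends
    have hunus : ∀ P : TPath A lamA s z, e0 ∉ P.edges :=
      fun P => not_mem_of_strict_max e0 hmax hzend P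
    set Φ : TPath (A.restrictE (fun e => ¬ (e = e0))) lam s z → TPath A lamA s z :=
      fun P => pushT (A := A.restrictE (fun e => ¬ (e = e0))) (B := A) (lamB := lamA) id Subtype.val hendsv id monotone_id
        (fun ε => hval ε.1 ε.2) P (fun a _ b _ h => h) with hΦ
    set Ψ : TPath A lamA s z → TPath (A.restrictE (fun e => ¬ (e = e0))) lam s z :=
      fun P => pullT (fun e => ¬ (e = e0)) lam id monotone_id
        (fun e h => (hval e h).symm) P (fun e he h => hunus P (h ▸ he)) with hΨ
    have hΦt : ∀ P, (Φ P).times = P.times := by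
      intro P; rw [hΦ]; simp only []; rw [pushT_times]; exact Set.image_id _
    have hΨt : ∀ P, (Ψ P).times = P.times := by
      intro P; rw [hΨ]; simp only []; rw [pullT_times]; exact Set.image_id _
    have e1 : maxD (A.restrictE (fun e => ¬ (e = e0))) lam s z = maxD A lamA s z := by
      apply _root_.le_antisymm
      · exact maxD_le_maxD hsz Φ (fun P Q h => by rw [hΦt, hΦt]; exact h)
      · exact maxD_le_maxD hsz Ψ (fun P Q h => by rw [hΨt, hΨt]; exact h)
    have e2 : minC (A.restrictE (fun e => ¬ (e = e0))) lam s z = minC A lamA s z := by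
      apply _root_.le_antisymm
      · refine minC_le_minC hsz (cut_pullback Φ id ?_)
        intro P t ht; rw [hΦt] at ht; exact ht
      · refine minC_le_minC hsz (cut_pullback Ψ id ?_)
        intro P t ht; rw [hΨt] at ht; exact ht
    rw [e1, e2]
    exact hA lamA hproperA s z hsz
  case pos =>
    by_cases hsend : s ∈ A.ends e0
    case neg =>
      -- shift everything by one, give e0 the strictly minimal time 1
      set lamA : A.E → ℕ := fun e => if h : e = e0 then 1 else lam ⟨e, h⟩ + 1 with hlamA
      have he0 : lamA e0 = 1 := by simp [hlamA]
      have hval : ∀ (e : A.E) (he : ¬ (e = e0)), lamA e = lam ⟨e, he⟩ + 1 := by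
        intro e he; simp only [hlamA]; rw [dif_neg he]
      have hmin : ∀ e, e ≠ e0 → lamA e0 < lamA e := by
        intro e he; rw [he0]
        have h1 : 0 < lam ⟨e, he⟩ := hproper.1 _
        have h2 := hval e he
        omega
      have hproperA : ProperTime A lamA := by
        constructor
        · intro e
          by_cases h : e = e0
          · subst h; rw [he0]; omega
          · have h2 := hval e h; omega
        · intro e f hef hends
          by_cases he : e = e0
          · subst he; intro h; have := hmin f (fun hh => hef hh.symm); omega
          · by_cases hf : f = e0
            · subst hf; intro h; have := hmin e he; omega
            · rw [hval e he, hval f hf]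
              have := hproper.2 ⟨e, he⟩ ⟨f, hf⟩
                (fun h => hef (congrArg Subtype.val h)) hends
              omega
      have hunus : ∀ P : TPath A lamA s z, e0 ∉ P.edges :=
        fun P => not_mem_of_strict_min e0 hmin hsend P
      set Φ : TPath (A.restrictE (fun e => ¬ (e = e0))) lam s z → TPath A lamA s z :=
        fun P => pushT (A := A.restrictE (fun e => ¬ (e = e0))) (B := A) (lamB := lamA) id Subtype.val hendsv (· + 1)
          (@id (Monotone (· + 1)) fun a b h => Nat.add_le_add_right h 1) (fun ε => hval ε.1 ε.2) P
          (fun a _ b _ h => h) with hΦ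
      set Ψ : TPath A lamA s z → TPath (A.restrictE (fun e => ¬ (e = e0))) lam s z :=
        fun P => pullT (fun e => ¬ (e = e0)) lam (· - 1)
          (@id (Monotone (· - 1)) fun a b h => Nat.sub_le_sub_right h 1)
          (fun e h => by rw [hval e h]; exact Eq.symm (Nat.add_sub_cancel _ _)) P (fun e he h => hunus P (h ▸ he)) with hΨ
      have hΦt : ∀ P, (Φ P).times = (· + 1) '' P.times := by
        intro P; rw [hΦ]; simp only []; rw [pushT_times]
      have hΨt : ∀ P, (Ψ P).times = (· - 1) '' P.times := by
        intro P; rw [hΨ]; simp only []; rw [pullT_times]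
      have htge : ∀ P : TPath A lamA s z, ∀ t ∈ P.times, 2 ≤ t := by
        rintro P t ⟨e, he, rfl⟩
        have hne : ¬ (e = e0) := fun h => hunus P (h ▸ he)
        have h1 : 0 < lam ⟨e, hne⟩ := hproper.1 _
        have h2 := hval e hne
        omega
      have e1 : maxD (A.restrictE (fun e => ¬ (e = e0))) lam s z = maxD A lamA s z := by
        apply _root_.le_antisymm
        · refine maxD_le_maxD hsz Φ (fun P Q h => ?_)
          rw [hΦt, hΦt]
          refine inter_image_empty _ ?_ h
          intro a _ b _ hab
          have hab' : a + 1 = b + 1 := hab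
          omega
        · refine maxD_le_maxD hsz Ψ (fun P Q h => ?_)
          rw [hΨt, hΨt]
          refine inter_image_empty _ ?_ h
          intro a ha b hb hab
          have hab' : a - 1 = b - 1 := hab
          have h2 : 2 ≤ a := by rcases ha with ha | ha; exacts [htge P a ha, htge Q a ha]
          have h3 : 2 ≤ b := by rcases hb with hb | hb; exacts [htge P b hb, htge Q b hb]
          omega
      have e2 : minC (A.restrictE (fun e => ¬ (e = e0))) lam s z = minC A lamA s z := by
        apply _root_.le_antisymm
        · refine minC_le_minC hsz (cut_pullback Φ (· - 1) ?_)
          intro P t ht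
          rw [hΦt] at ht
          obtain ⟨t', ht', rfl⟩ := ht
          simpa using ht'
        · refine minC_le_minC hsz (cut_pullback Ψ (· + 1) ?_)
          intro P t ht
          rw [hΨt] at ht
          obtain ⟨t', ht', rfl⟩ := ht
          have := htge P t' ht'
          have h4 : t' - 1 + 1 = t' := by omega
          show t' - 1 + 1 ∈ P.times
          rw [h4]; exact ht'
      rw [e1, e2]
      exact hA lamA hproperA s z hsz
    case pos =>
      -- e0 is a parallel s-z edge; both quantities go up by exactly one
      have hends0 : A.ends e0 = s(s, z) := by
        obtain ⟨⟨a, b⟩, hab⟩ := Quot.exists_rep (A.ends e0)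
        have hab' : A.ends e0 = s(a, b) := hab.symm
        rw [hab'] at hsend hzend
        rw [Sym2.mem_iff] at hsend hzend
        rw [hab']
        rcases hsend with rfl | rfl
        · rcases hzend with hz | rfl
          · exact absurd hz.symm hsz
          · rfl
        · rcases hzend with rfl | hz
          · exact Sym2.eq_swap
          · exact absurd hz.symm hsz
      set M : ℕ := (Finset.univ.sup fun ε : (A.restrictE (fun e => ¬ (e = e0))).E => lam ε) + 1
        with hM
      set lamA : A.E → ℕ := fun e => if h : e = e0 then M else lam ⟨e, h⟩ with hlamA
      have he0 : lamA e0 = M := by simp [hlamA]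
      have hval : ∀ (e : A.E) (he : ¬ (e = e0)), lamA e = lam ⟨e, he⟩ := by
        intro e he; simp only [hlamA]; rw [dif_neg he]
      have hltM : ∀ (e : A.E) (he : ¬ (e = e0)), lamA e < M := by
        intro e he; rw [hval e he]
        have h5 : lam ⟨e, he⟩ ≤ Finset.univ.sup
            (fun ε : (A.restrictE (fun e => ¬ (e = e0))).E => lam ε) :=
          Finset.le_sup (Finset.mem_univ _)
        omega
      have hmax : ∀ e, e ≠ e0 → lamA e < lamA e0 := by
        intro e he; rw [he0]; exact hltM e he
      have hproperA : ProperTime A lamA := by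
        constructor
        · intro e
          by_cases h : e = e0
          · subst h; rw [he0]; omega
          · have h1 : 0 < lam ⟨e, h⟩ := hproper.1 _
            rw [hval e h]; exact h1
        · intro e f hef hends
          by_cases he : e = e0
          · subst he; intro h; have := hmax f (fun hh => hef hh.symm); omega
          · by_cases hf : f = e0
            · subst hf; intro h; have := hmax e he; omega
            · rw [hval e he, hval f hf]
              exact hproper.2 ⟨e, he⟩ ⟨f, hf⟩
                (fun h => hef (congrArg Subtype.val h)) hends
      -- the special single-edge path
      set Pe : TPath A lamA s z := mkT [s, z] [e0] ⟨hends0, trivial⟩ rfl rfl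
        (by simp [hsz]) (List.isChain_singleton _) with hPe
      have hPet : Pe.times = {M} := by
        ext t
        constructor
        · rintro ⟨e, he, rfl⟩
          have he2 : e = e0 := by simpa [hPe, mkT] using he
          subst he2; rw [he0]; rfl
        · rintro rfl
          exact ⟨e0, by simp [hPe, mkT], he0⟩
      have hMmem : ∀ P : TPath A lamA s z, e0 ∈ P.edges → M ∈ P.times :=
        fun P h => ⟨e0, h, he0⟩
      have hpuret : ∀ P : TPath A lamA s z, e0 ∉ P.edges → ∀ t ∈ P.times, t < M := by
        rintro P hp t ⟨e, he, rfl⟩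
        have hne : ¬ (e = e0) := fun h => hp (h ▸ he)
        exact hltM e hne
      set Φ : TPath (A.restrictE (fun e => ¬ (e = e0))) lam s z → TPath A lamA s z :=
        fun P => pushT (A := A.restrictE (fun e => ¬ (e = e0))) (B := A) (lamB := lamA) id Subtype.val hendsv id monotone_id
          (fun ε => hval ε.1 ε.2) P (fun a _ b _ h => h) with hΦ
      have hΦt : ∀ P, (Φ P).times = P.times := by
        intro P; rw [hΦ]; simp only []; rw [pushT_times]; exact Set.image_id _
      have hpull : ∀ (P : TPath A lamA s z), e0 ∉ P.edges →
          ∃ Q : TPath (A.restrictE (fun e => ¬ (e = e0))) lam s z, Q.times = P.times := by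
        intro P hp
        refine ⟨pullT (fun e => ¬ (e = e0)) lam id monotone_id
          (fun e h => (hval e h).symm) P (fun e he h => hp (h ▸ he)), ?_⟩
        rw [pullT_times]; exact Set.image_id _
      have e1 : maxD A lamA s z = maxD (A.restrictE (fun e => ¬ (e = e0))) lam s z + 1 := by
        apply _root_.le_antisymm
        · refine maxD_le (fun k f hf => ?_)
          by_cases hpure : ∀ i, e0 ∉ (f i).edges
          · have hk : k ≤ maxD (A.restrictE (fun e => ¬ (e = e0))) lam s z := by
              choose g hg using fun i => hpull (f i) (hpure i)
              refine le_maxD hsz g (fun i j hij => ?_)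
              unfold SnapDisjoint
              rw [hg i, hg j]
              exact hf i j hij
            omega
          · push_neg at hpure
            obtain ⟨i0, hi0⟩ := hpure
            obtain ⟨k', rfl⟩ : ∃ k', k = k' + 1 := ⟨k - 1, by have := i0.pos; omega⟩
            have hgood : ∀ j : Fin k', e0 ∉ (f (i0.succAbove j)).edges := by
              intro j hmem
              have hne : i0.succAbove j ≠ i0 := Fin.succAbove_ne i0 j
              have hd := hf _ _ hne
              rw [snapDisjoint_iff] at hd
              exact hd M (hMmem _ hmem) (hMmem _ hi0)
            choose g hg using fun j : Fin k' => hpull (f (i0.succAbove j)) (hgood j)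
            have hk' : k' ≤ maxD (A.restrictE (fun e => ¬ (e = e0))) lam s z := by
              refine le_maxD hsz g (fun i j hij => ?_)
              unfold SnapDisjoint
              rw [hg i, hg j]
              exact hf _ _ (fun h => hij (Fin.succAbove_right_injective h))
            omega
        · obtain ⟨g, hg⟩ := exists_max_family hsz
            (G := A.restrictE (fun e => ¬ (e = e0))) (lam := lam)
          have hdisj : ∀ (i : Fin (maxD (A.restrictE (fun e => ¬ (e = e0))) lam s z)),
              (Φ (g i)).times ∩ Pe.times = ∅ := by
            intro i
            rw [hΦt, hPet]
            ext t
            simp only [Set.mem_inter_iff, Set.mem_singleton_iff, Set.mem_empty_iff_false,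
              iff_false, not_and]
            rintro ht rfl
            have hMlt := hpuret (Φ (g i)) ?_ M (by rw [hΦt]; exact ht)
            · exact absurd hMlt (lt_irrefl _)
            · intro hm
              rw [hΦ] at hm
              simp only [pushT, mkT, List.mem_map] at hm
              obtain ⟨ε, _, hε⟩ := hm
              exact ε.2 hε
          have hstep := le_maxD (G := A) (lam := lamA) hsz (Fin.lastCases (motive := fun _ => TPath A lamA s z) Pe (fun i => Φ (g i))) ?_
          · omega
          intro i j hij
          unfold SnapDisjoint
          rcases Fin.eq_castSucc_or_eq_last i with ⟨i', rfl⟩ | rfl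
          · rcases Fin.eq_castSucc_or_eq_last j with ⟨j', rfl⟩ | rfl
            · rw [Fin.lastCases_castSucc, Fin.lastCases_castSucc]
              have hd := hg i' j' (fun h => hij (by rw [h]))
              unfold SnapDisjoint at hd
              rw [hΦt, hΦt]
              exact hd
            · rw [Fin.lastCases_last, Fin.lastCases_castSucc]
              exact hdisj i'
          · rcases Fin.eq_castSucc_or_eq_last j with ⟨j', rfl⟩ | rfl
            · rw [Fin.lastCases_last, Fin.lastCases_castSucc]
              rw [Set.inter_comm]
              exact hdisj j'
            · exact absurd rfl hij
      have e2 : minC A lamA s z = minC (A.restrictE (fun e => ¬ (e = e0))) lam s z + 1 := by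
        apply _root_.le_antisymm
        · obtain ⟨S, hcard, hS⟩ := exists_min_cut hsz
            (G := A.restrictE (fun e => ¬ (e = e0))) (lam := lam)
          have hcut : IsSnapCut A lamA s z ↑(insert M S) := by
            intro P
            by_cases hp : e0 ∈ P.edges
            · exact ⟨e0, hp, by rw [he0]; simp⟩
            · obtain ⟨ε, hε, hεS⟩ := hS (pullT (fun e => ¬ (e = e0)) lam id monotone_id
                (fun e h => (hval e h).symm) P (fun e he h => hp (h ▸ he)))
              have hε' : ε.val ∈ P.edges := by
                simp only [pullT, mkT, List.mem_pmap] at hε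
                obtain ⟨e, he, rfl⟩ := hε; exact he
              refine ⟨ε.val, hε', ?_⟩
              rw [hval ε.1 ε.2]
              simp only [Finset.coe_insert, Set.mem_insert_iff]
              right
              exact hεS
          have h1 := minC_le hcut
          have h2 : (insert M S).card ≤ S.card + 1 := Finset.card_insert_le _ _
          omega
        · obtain ⟨S, hcard, hS⟩ := exists_min_cut hsz (G := A) (lam := lamA)
          have hMS : M ∈ S := by
            obtain ⟨e, he, heS⟩ := hS Pe
            have he2 : e = e0 := by simpa [hPe, mkT] using he
            subst he2; rw [he0] at heS; exact heS
          have hcut : IsSnapCut (A.restrictE (fun e => ¬ (e = e0))) lam s z ↑(S.erase M) := by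
            intro P
            obtain ⟨ε, hε, hεS⟩ := hS (Φ P)
            have hex : ∃ ε' : (A.restrictE (fun e => ¬ (e = e0))).E,
                ε' ∈ P.edges ∧ ε'.val = ε := by
              rw [hΦ] at hε
              simp only [pushT, mkT, List.mem_map] at hε
              obtain ⟨ε', h1, h2⟩ := hε
              exact ⟨ε', h1, h2⟩
            obtain ⟨ε', hε', rfl⟩ := hex
            refine ⟨ε', hε', ?_⟩
            have hv : lamA ε'.val = lam ε' := hval ε'.1 ε'.2
            have hlt : lamA ε'.val < M := hltM ε'.1 ε'.2
            rw [hv] at hlt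
            refine Finset.mem_coe.2 (Finset.mem_erase.2 ⟨by omega, ?_⟩)
            rw [← hv]
            exact hεS
          have h1 := minC_le hcut
          have h2 : (S.erase M).card = S.card - 1 := Finset.card_erase_of_mem hMS
          have h3 : 0 < S.card := Finset.card_pos.2 ⟨M, hMS⟩
          omega
      have hAeq := hA lamA hproperA s z hsz
      omega

end MengDel

section Subgraph

lemma sym2_map_inj {α β : Type} {f : α → β} (hf : Function.Injective f) :
    Function.Injective (Sym2.map f) := by
  intro σ τ h
  induction σ using Sym2.ind with
  | _ a b =>
  induction τ using Sym2.ind with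
  | _ c d =>
  rw [Sym2.map_pair_eq, Sym2.map_pair_eq, Sym2.eq_iff] at h
  rw [Sym2.eq_iff]
  rcases h with ⟨h1, h2⟩ | ⟨h1, h2⟩
  · exact Or.inl ⟨hf h1, hf h2⟩
  · exact Or.inr ⟨hf h1, hf h2⟩

lemma meng_restrict_aux {G : Multigraph} (hG : Mengerian G) :
    ∀ (n : ℕ) (P : G.E → Prop) (dp : DecidablePred P),
      (Finset.univ.filter (fun e => ¬ P e)).card = n →
      Mengerian (@Multigraph.restrictE G P dp) := by
  intro n
  induction n with
  | zero =>
    intro P dp hcard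
    have hall : ∀ e, P e := by
      intro e
      by_contra h
      have : e ∈ Finset.univ.filter (fun e => ¬ P e) := by simp [h]
      rw [Finset.card_eq_zero] at hcard
      rw [hcard] at this
      simp at this
    refine meng_of_miso ⟨Equiv.refl G.V, (Equiv.subtypeUnivEquiv hall), ?_⟩ hG
    intro e
    simp [Multigraph.restrictE]
  | succ n ih =>
    intro P dp hcard
    have hex : ∃ e0, ¬ P e0 := by
      have : 0 < (Finset.univ.filter (fun e => ¬ P e)).card := by omega
      obtain ⟨e0, he0⟩ := Finset.card_pos.1 this
      exact ⟨e0, (Finset.mem_filter.1 he0).2⟩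
    obtain ⟨e0, he0⟩ := hex
    have hcard' : (Finset.univ.filter (fun e => ¬ (P e ∨ e = e0))).card = n := by
      have hEq : Finset.univ.filter (fun e => ¬ (P e ∨ e = e0))
          = (Finset.univ.filter (fun e => ¬ P e)).erase e0 := by
        ext e
        simp only [Finset.mem_filter, Finset.mem_erase, Finset.mem_univ, true_and]
        tauto
      rw [hEq, Finset.card_erase_of_mem (by simp [he0]), hcard]
      rfl
    have hK' := ih (fun e => P e ∨ e = e0) inferInstance hcard'
    have hdel := meng_delone
      (A := G.restrictE (fun e => P e ∨ e = e0)) ⟨e0, Or.inr rfl⟩ hK'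
    exact meng_of_miso (A := G.restrictE P)
      (B := (G.restrictE fun e => P e ∨ e = e0).restrictE fun e => ¬ (e = ⟨e0, Or.inr rfl⟩))
      ⟨Equiv.refl G.V,
        ⟨fun e => ⟨⟨e.1, Or.inl e.2⟩,
            fun h => he0 ((show (e.1 : G.E) = e0 from congrArg Subtype.val h) ▸ e.2)⟩,
          fun ε => ⟨ε.1.1, ε.1.2.resolve_right
            (fun h => absurd (Subtype.ext h) ε.2)⟩,
          fun e => rfl, fun ε => rfl⟩,
        fun e => by simp [Multigraph.restrictE]⟩ hdel

lemma meng_restrict {G : Multigraph} (hG : Mengerian G) (P : G.E → Prop) [dp : DecidablePred P] :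
    Mengerian (G.restrictE P) :=
  meng_restrict_aux hG _ P dp rfl

lemma meng_subgraph {K G : Multigraph} (hsub : IsSubgraph K G) (hG : Mengerian G) :
    Mengerian K := by
  obtain ⟨fv, fe, hfv, hfe, hends⟩ := hsub
  have hG0 : Mengerian (G.restrictE (fun ε => ∃ e, fe e = ε)) :=
    meng_restrict hG _
  set G0 := G.restrictE (fun ε => ∃ e, fe e = ε) with hG0def
  have hbij : Function.Bijective (fun e : K.E => (⟨fe e, ⟨e, rfl⟩⟩ : G0.E)) := by
    constructor
    · intro a b h
      exact hfe (congrArg Subtype.val h)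
    · rintro ⟨ε, e, he⟩
      exact ⟨e, Subtype.ext he⟩
  set η : K.E ≃ G0.E := Equiv.ofBijective _ hbij with hη
  intro lam hproper s z hsz
  haveI : Nonempty K.V := ⟨s⟩
  set lam0 : G0.E → ℕ := fun ε => lam (η.symm ε) with hlam0
  have hηval : ∀ e : K.E, (η e).val = fe e := fun e => rfl
  have hendsF : ∀ e : K.E, G0.ends (η e) = (K.ends e).map fv := by
    intro e
    show G.ends (η e).val = (K.ends e).map fv
    rw [hηval]
    exact hends e
  have hG0ends : ∀ ε : G0.E, G0.ends ε = (K.ends (η.symm ε)).map fv := by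
    intro ε
    have h2 := hendsF (η.symm ε)
    rwa [η.apply_symm_apply] at h2
  have hproper0 : ProperTime G0 lam0 := by
    constructor
    · intro ε; exact hproper.1 _
    · intro ε ε' hne hEq
      rw [hG0ends, hG0ends] at hEq
      have h2 : K.ends (η.symm ε) = K.ends (η.symm ε') := sym2_map_inj hfv hEq
      exact hproper.2 _ _ (fun h => hne (by
        have := congrArg η h
        rwa [η.apply_symm_apply, η.apply_symm_apply] at this)) h2
  have hfvsz : fv s ≠ fv z := fun h => hsz (hfv h)
  have hmain := hG0 lam0 hproper0 (fv s) (fv z) hfvsz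
  -- forward transfer
  have hlamF : ∀ e : K.E, lam0 (η e) = id (lam e) := by
    intro e; simp only [hlam0, η.symm_apply_apply]; rfl
  set Φ : TPath K lam s z → TPath G0 lam0 (fv s) (fv z) :=
    fun P => pushT (A := K) (B := G0) (lamB := lam0) fv (fun e => η e) hendsF id monotone_id hlamF P (fun a _ b _ h => hfv h) with hΦ
  have hΦt : ∀ P, (Φ P).times = P.times := by
    intro P; rw [hΦ]; simp only []; rw [pushT_times]; exact Set.image_id _
  -- backward transfer
  have hlinv := Function.leftInverse_invFun hfv
  have hendsB : ∀ ε : G0.E, K.ends (η.symm ε) = (G0.ends ε).map (Function.invFun fv) := by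
    intro ε
    rw [hG0ends ε, Sym2.map_map]
    have : (Function.invFun fv ∘ fv) = id := funext (fun a => hlinv a)
    rw [this, Sym2.map_id]; rfl
  have hrange : ∀ (P : TPath G0 lam0 (fv s) (fv z)), ∀ v ∈ P.verts, v ∈ Set.range fv := by
    intro P v hv
    rcases P.vert_cases v hv with rfl | ⟨ε, _, hm⟩
    · exact ⟨s, rfl⟩
    · rw [hG0ends ε] at hm
      rw [Sym2.mem_map] at hm
      obtain ⟨a, _, ha⟩ := hm
      exact ⟨a, ha⟩
  set Ψ : TPath G0 lam0 (fv s) (fv z) → TPath K lam s z :=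
    fun P => castT (hlinv s) (hlinv z)
      (pushT (A := G0) (B := K) (lamB := lam) (Function.invFun fv) (fun ε => η.symm ε) hendsB id monotone_id (fun ε => rfl) P
        (fun a ha b hb h => by
          obtain ⟨a', rfl⟩ := hrange P a ha
          obtain ⟨b', rfl⟩ := hrange P b hb
          rw [hlinv a', hlinv b'] at h
          rw [h])) with hΨ
  have hΨt : ∀ P, (Ψ P).times = P.times := by
    intro P; rw [hΨ]; simp only [castT_times]; rw [pushT_times]; exact Set.image_id _
  have e1 : maxD K lam s z = maxD G0 lam0 (fv s) (fv z) := by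
    apply _root_.le_antisymm
    · exact maxD_le_maxD hfvsz Φ (fun P Q h => by rw [hΦt, hΦt]; exact h)
    · exact maxD_le_maxD hsz Ψ (fun P Q h => by rw [hΨt, hΨt]; exact h)
  have e2 : minC K lam s z = minC G0 lam0 (fv s) (fv z) := by
    apply _root_.le_antisymm
    · refine minC_le_minC hfvsz (cut_pullback Φ id ?_)
      intro P t ht; rw [hΦt] at ht; exact ht
    · refine minC_le_minC hsz (cut_pullback Ψ id ?_)
      intro P t ht; rw [hΨt] at ht; exact ht
  rw [e1, e2, hmain]

end Subgraph

section Subdiv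

variable {A : Multigraph}

def projD (x y : A.V) : (A.msubdiv x y).E → A.E
  | Sum.inl e => e.1
  | Sum.inr (e, _) => e.1

def toD (x y : A.V) (e : A.E) : (A.msubdiv x y).E :=
  if h : A.ends e = s(x, y) then Sum.inr (⟨e, h⟩, true) else Sum.inl ⟨e, h⟩

lemma projD_toD (x y : A.V) (e : A.E) : projD x y (toD x y e) = e := by
  unfold toD; split <;> rfl

lemma D_ends_inl (x y : A.V) (e : {e : A.E // A.ends e ≠ s(x, y)}) :
    (A.msubdiv x y).ends (Sum.inl e) = (A.ends e.1).map some := rfl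

lemma D_ends_tt (x y : A.V) (e : {e : A.E // A.ends e = s(x, y)}) :
    (A.msubdiv x y).ends (Sum.inr (e, true)) = s(some x, (none : Option A.V)) := rfl

lemma D_ends_ff (x y : A.V) (e : {e : A.E // A.ends e = s(x, y)}) :
    (A.msubdiv x y).ends (Sum.inr (e, false)) = s((none : Option A.V), some y) := rfl

def spV (x y : A.V) : List A.V → List A.E → List (Option A.V)
  | vs, [] => vs.map some
  | [], _ :: _ => []
  | u :: vs, e :: es =>
    if A.ends e = s(x, y) then some u :: none :: vs.map some
    else some u :: spV x y vs es

def spE (x y : A.V) : List A.V → List A.E → List (A.msubdiv x y).E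
  | _, [] => []
  | [], _ :: _ => []
  | u :: vs, e :: es =>
    if h : A.ends e = s(x, y) then
      (if u = x then ([Sum.inr (⟨e, h⟩, true), Sum.inr (⟨e, h⟩, false)] :
          List (A.msubdiv x y).E)
       else ([Sum.inr (⟨e, h⟩, false), Sum.inr (⟨e, h⟩, true)] :
          List (A.msubdiv x y).E)) ++ es.map (toD x y)
    else Sum.inl ⟨e, h⟩ :: spE x y vs es

variable {x y : A.V} {lamA : A.E → ℕ}

lemma lamD_toD (e : A.E) : lamA (projD x y (toD x y e)) = lamA e := by rw [projD_toD]

/-- every endpoint of an edge of an Okl-walk is a vertex of the walk -/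
lemma okl_ends_mem {vs : List A.V} {es : List A.E} (hok : Okl A vs es) :
    ∀ e ∈ es, ∀ v ∈ A.ends e, v ∈ vs := by
  intro e he v hv
  obtain ⟨⟨i, hi⟩, rfl⟩ := List.mem_iff_get.1 he
  have hlen := okl_length hok
  have := forall_of_okl A es vs hok i hi (by omega) (by omega)
  rw [this] at hv
  rw [Sym2.mem_iff] at hv
  rcases hv with rfl | rfl
  · exact List.get_mem _ _
  · exact List.get_mem _ _

lemma okl_mapToD : ∀ (es : List A.E) (vs : List A.V), Okl A vs es →
    (∀ e ∈ es, A.ends e ≠ s(x, y)) →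
    Okl (A.msubdiv x y) (vs.map some) (es.map (toD x y))
  | [], [v], _, _ => trivial
  | e :: es, u :: v :: vs, hok, hno => by
    have hne : A.ends e ≠ s(x, y) := hno e (List.mem_cons_self)
    refine ⟨?_, okl_mapToD es (v :: vs) hok.2 (fun e' he' => hno e' (List.mem_cons_of_mem _ he'))⟩
    show (A.msubdiv x y).ends (toD x y e) = _
    unfold toD
    rw [dif_neg hne]
    rw [D_ends_inl, hok.1, Sym2.map_pair_eq]
  | [], [], h, _ => h.elim
  | [], _ :: _ :: _, h, _ => h.elim
  | _ :: _, [], h, _ => h.elim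
  | _ :: _, [_], h, _ => h.elim

lemma spV_shape (v : A.V) (vs : List A.V) (es : List A.E) :
    ∃ rest, spV x y (v :: vs) es = some v :: rest := by
  cases es with
  | nil => exact ⟨vs.map some, rfl⟩
  | cons e es =>
    by_cases h : A.ends e = s(x, y)
    · exact ⟨none :: vs.map some, by rw [spV, if_pos h]⟩
    · exact ⟨spV x y vs es, by rw [spV, if_neg h]⟩

lemma sp_okl : ∀ (es : List A.E) (vs : List A.V), Okl A vs es → vs.Nodup →
    Okl (A.msubdiv x y) (spV x y vs es) (spE x y vs es)
  | [], [v], _, _ => trivial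
  | e :: es, u :: v :: vs, hok, hnd => by
    by_cases h : A.ends e = s(x, y)
    · rw [spV, if_pos h, spE, dif_pos h]
      have hxy : x ≠ y := by
        have := A.loopless e
        rw [h] at this
        intro hh; exact this (by rw [hh]; exact Sym2.mk_isDiag_iff.2 rfl)
      have huv : s(u, v) = s(x, y) := hok.1 ▸ h
      rw [Sym2.eq_iff] at huv
      have hno : ∀ e' ∈ es, A.ends e' ≠ s(x, y) := by
        intro e' he' hxy'
        have hx := okl_ends_mem hok.2 e' he' x (by rw [hxy']; simp)
        have hy := okl_ends_mem hok.2 e' he' y (by rw [hxy']; simp)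
        rcases huv with ⟨hu, hv⟩ | ⟨hu, hv⟩
        · exact (List.nodup_cons.1 hnd).1 (by rw [hu]; exact hx)
        · exact (List.nodup_cons.1 hnd).1 (by rw [hu]; exact hy)
      have hrest := okl_mapToD es (v :: vs) hok.2 hno
      rcases huv with ⟨hu, hv⟩ | ⟨hu, hv⟩
      · rw [if_pos hu]
        refine ⟨?_, ?_, hrest⟩
        · rw [D_ends_tt, hu]
        · rw [D_ends_ff, hv]
      · rw [if_neg (by rw [hu]; exact Ne.symm hxy)]
        refine ⟨?_, ?_, hrest⟩
        · rw [D_ends_ff, hu]; exact Sym2.eq_swap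
        · rw [D_ends_tt, hv]; exact Sym2.eq_swap
    · rw [spV, if_neg h, spE, dif_neg h]
      obtain ⟨rest, hrest⟩ := spV_shape (x := x) (y := y) v vs es
      rw [hrest]
      refine ⟨by rw [D_ends_inl, hok.1, Sym2.map_pair_eq], ?_⟩
      have := sp_okl es (v :: vs) hok.2 (List.nodup_cons.1 hnd).2
      rwa [hrest] at this
  | [], [], h, _ => h.elim
  | [], _ :: _ :: _, h, _ => h.elim
  | _ :: _, [], h, _ => h.elim
  | _ :: _, [_], h, _ => h.elim

lemma sp_head (vs : List A.V) (es : List A.E) :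
    (spV x y vs es).head? = vs.head?.map some := by
  cases es with
  | nil => rw [spV]; exact List.head?_map
  | cons e es =>
    cases vs with
    | nil => rfl
    | cons u vs =>
      by_cases h : A.ends e = s(x, y)
      · rw [spV, if_pos h]; rfl
      · rw [spV, if_neg h]; rfl

lemma sp_last : ∀ (es : List A.E) (vs : List A.V), Okl A vs es →
    (spV x y vs es).getLast? = vs.getLast?.map some
  | [], vs, _ => by rw [spV]; exact List.getLast?_map
  | e :: es, u :: v :: vs, hok => by
    by_cases h : A.ends e = s(x, y)
    · rw [spV, if_pos h]
      show (some u :: none :: some v :: vs.map some).getLast? = _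
      rw [List.getLast?_cons_cons, List.getLast?_cons_cons, List.getLast?_cons_cons]
      rw [← List.map_cons]
      exact List.getLast?_map
    · rw [spV, if_neg h]
      obtain ⟨rest, hrest⟩ := spV_shape (x := x) (y := y) v vs es
      rw [hrest, List.getLast?_cons_cons, ← hrest, List.getLast?_cons_cons]
      exact sp_last es (v :: vs) hok.2
  | _ :: _, [], h => h.elim
  | _ :: _, [_], h => h.elim

lemma sp_mem : ∀ (es : List A.E) (vs : List A.V) (w : Option A.V),
    w ∈ spV x y vs es → w = none ∨ ∃ u ∈ vs, w = some u := by
  intro es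
  induction es with
  | nil =>
    intro vs w hw
    rw [spV] at hw
    rw [List.mem_map] at hw
    obtain ⟨u, hu, rfl⟩ := hw
    exact Or.inr ⟨u, hu, rfl⟩
  | cons e es ih =>
    intro vs w hw
    cases vs with
    | nil => simp [spV] at hw
    | cons u vs =>
      by_cases h : A.ends e = s(x, y)
      · rw [spV, if_pos h] at hw
        rcases List.mem_cons.1 hw with rfl | hw
        · exact Or.inr ⟨u, List.mem_cons_self, rfl⟩
        rcases List.mem_cons.1 hw with rfl | hw
        · exact Or.inl rfl
        · rw [List.mem_map] at hw
          obtain ⟨u', hu', rfl⟩ := hw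
          exact Or.inr ⟨u', List.mem_cons_of_mem _ hu', rfl⟩
      · rw [spV, if_neg h] at hw
        rcases List.mem_cons.1 hw with rfl | hw
        · exact Or.inr ⟨u, List.mem_cons_self, rfl⟩
        · rcases ih vs w hw with h1 | ⟨u', hu', rfl⟩
          · exact Or.inl h1
          · exact Or.inr ⟨u', List.mem_cons_of_mem _ hu', rfl⟩

lemma sp_nodup : ∀ (es : List A.E) (vs : List A.V), vs.Nodup →
    (spV x y vs es).Nodup
  | [], vs, hnd => by rw [spV]; exact hnd.map (Option.some_injective _)
  | e :: es, [], _ => by simp [spV]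
  | e :: es, u :: vs, hnd => by
    by_cases h : A.ends e = s(x, y)
    · rw [spV, if_pos h]
      refine List.nodup_cons.2 ⟨?_, List.nodup_cons.2 ⟨?_, ?_⟩⟩
      · intro hmem
        rcases List.mem_cons.1 hmem with hc | hc
        · exact Option.some_ne_none u hc
        · rw [List.mem_map] at hc
          obtain ⟨u', hu', hu'2⟩ := hc
          have : u = u' := Option.some_injective _ hu'2.symm
          exact (List.nodup_cons.1 hnd).1 (this ▸ hu')
      · intro hmem
        rw [List.mem_map] at hmem
        obtain ⟨u', _, hu'2⟩ := hmem
        exact Option.some_ne_none u' hu'2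
      · exact ((List.nodup_cons.1 hnd).2).map (Option.some_injective _)
    · rw [spV, if_neg h]
      refine List.nodup_cons.2 ⟨?_, sp_nodup es vs (List.nodup_cons.1 hnd).2⟩
      intro hmem
      rcases sp_mem es vs (some u) hmem with hc | ⟨u', hu', hu'2⟩
      · exact Option.some_ne_none u hc
      · have : u = u' := Option.some_injective _ hu'2
        exact (List.nodup_cons.1 hnd).1 (this ▸ hu')

lemma sp_lam_head : ∀ (es : List A.E) (vs : List A.V), Okl A vs es →
    ((spE x y vs es).map (fun ε => lamA (projD x y ε))).head? = (es.map lamA).head?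
  | [], vs, _ => by rw [spE]; rfl
  | e :: es, u :: v :: vs, hok => by
    by_cases h : A.ends e = s(x, y)
    · rw [spE, dif_pos h]
      by_cases hu : u = x
      · rw [if_pos hu]; rfl
      · rw [if_neg hu]; rfl
    · rw [spE, dif_neg h]; rfl
  | _ :: _, [], h => h.elim
  | _ :: _, [_], h => h.elim

lemma sp_chain : ∀ (es : List A.E) (vs : List A.V), Okl A vs es →
    List.Chain' (· ≤ ·) (es.map lamA) →
    List.Chain' (· ≤ ·) ((spE x y vs es).map (fun ε => lamA (projD x y ε)))
  | [], vs, _, _ => by rw [spE]; simp [List.Chain']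
  | e :: es, u :: v :: vs, hok, hch => by
    have hmap : (es.map (toD x y)).map (fun ε => lamA (projD x y ε)) = es.map lamA := by
      rw [List.map_map]
      apply List.map_congr_left
      intro e' _
      exact lamD_toD e'
    by_cases h : A.ends e = s(x, y)
    · rw [spE, dif_pos h]
      have hch2 : List.Chain' (· ≤ ·) (lamA e :: lamA e :: es.map lamA) := by
        rw [List.map_cons] at hch
        rw [List.Chain', List.isChain_cons]
        refine ⟨?_, hch⟩
        intro b hb
        rw [List.head?_cons] at hb
        cases hb
        exact le_refl _
      by_cases hu : u = x
      · rw [if_pos hu]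
        rw [List.map_append,
          show (List.map (fun ε => lamA (projD x y ε))
            ([Sum.inr (⟨e, h⟩, true), Sum.inr (⟨e, h⟩, false)] :
              List (A.msubdiv x y).E)) = [lamA e, lamA e] from rfl, hmap]
        simpa using hch2
      · rw [if_neg hu]
        rw [List.map_append,
          show (List.map (fun ε => lamA (projD x y ε))
            ([Sum.inr (⟨e, h⟩, false), Sum.inr (⟨e, h⟩, true)] :
              List (A.msubdiv x y).E)) = [lamA e, lamA e] from rfl, hmap]
        simpa using hch2
    · rw [spE, dif_neg h]
      rw [List.map_cons] at hch ⊢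
      rw [List.Chain', List.isChain_cons] at hch ⊢
      refine ⟨?_, sp_chain es (v :: vs) hok.2 hch.2⟩
      intro b hb
      rw [sp_lam_head es (v :: vs) hok.2] at hb
      exact hch.1 b hb
  | _ :: _, [], h, _ => h.elim
  | _ :: _, [_], h, _ => h.elim

lemma sp_times : ∀ (es : List A.E) (vs : List A.V), Okl A vs es → ∀ (t : ℕ),
    ((∃ ε ∈ spE x y vs es, lamA (projD x y ε) = t) ↔ (∃ e ∈ es, lamA e = t))
  | [], [v], _, t => by
    constructor
    · rintro ⟨ε, hε, rfl⟩; rw [spE] at hε; simp at hε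
    · rintro ⟨e, he, rfl⟩; simp at he
  | e :: es, u :: v :: vs, hok, t => by
    by_cases h : A.ends e = s(x, y)
    · rw [spE, dif_pos h]
      constructor
      · rintro ⟨ε, hε, rfl⟩
        rw [List.mem_append] at hε
        rcases hε with hε | hε
        · refine ⟨e, List.mem_cons_self, ?_⟩
          by_cases hu : u = x
          · rw [if_pos hu] at hε
            rcases List.mem_cons.1 hε with rfl | hε
            · rfl
            rcases List.mem_cons.1 hε with rfl | hε
            · rfl
            · simp at hε
          · rw [if_neg hu] at hε
            rcases List.mem_cons.1 hε with rfl | hε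
            · rfl
            rcases List.mem_cons.1 hε with rfl | hε
            · rfl
            · simp at hε
        · rw [List.mem_map] at hε
          obtain ⟨e', he', rfl⟩ := hε
          exact ⟨e', List.mem_cons_of_mem _ he', (lamD_toD e').symm⟩
      · rintro ⟨e', he', rfl⟩
        rcases List.mem_cons.1 he' with rfl | he'
        · by_cases hu : u = x
          · rw [if_pos hu]
            exact ⟨Sum.inr (⟨e', h⟩, true), by simp, rfl⟩
          · rw [if_neg hu]
            exact ⟨Sum.inr (⟨e', h⟩, false), by simp, rfl⟩
        · exact ⟨toD x y e', List.mem_append_right _ (List.mem_map_of_mem he'), lamD_toD e'⟩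
    · rw [spE, dif_neg h]
      constructor
      · rintro ⟨ε, hε, rfl⟩
        rcases List.mem_cons.1 hε with rfl | hε
        · exact ⟨e, List.mem_cons_self, rfl⟩
        · obtain ⟨e', he', heq⟩ := (sp_times es (v :: vs) hok.2 _).1 ⟨ε, hε, rfl⟩
          exact ⟨e', List.mem_cons_of_mem _ he', heq⟩
      · rintro ⟨e', he', rfl⟩
        rcases List.mem_cons.1 he' with rfl | he'
        · exact ⟨Sum.inl ⟨e', h⟩, List.mem_cons_self, rfl⟩
        · obtain ⟨ε, hε, hε2⟩ := (sp_times es (v :: vs) hok.2 _).2 ⟨e', he', rfl⟩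
          exact ⟨ε, List.mem_cons_of_mem _ hε, hε2⟩
  | [], [], h, _ => h.elim
  | [], _ :: _ :: _, h, _ => h.elim
  | _ :: _, [], h, _ => h.elim
  | _ :: _, [_], h, _ => h.elim

end Subdiv
section Collapse

variable {A : Multigraph} {x y : A.V} {lamA : A.E → ℕ}

def colV {α : Type} (vs : List (Option α)) : List α := vs.filterMap id

lemma colV_some {α : Type} (u : α) (vs : List (Option α)) :
    colV (some u :: vs) = u :: colV vs := by simp [colV]

lemma colV_none {α : Type} (vs : List (Option α)) : colV (none :: vs) = colV vs := by
  simp [colV]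

def colE (x y : A.V) : List (Option A.V) → List (A.msubdiv x y).E → List A.E
  | _, [] => []
  | [], _ :: _ => []
  | none :: vs, _ :: es => colE x y vs es
  | some _ :: vs, ε :: es => projD x y ε :: colE x y vs es

lemma col_sublist : ∀ (es : List (A.msubdiv x y).E) (vs : List (Option A.V)),
    ∃ l : List (A.msubdiv x y).E, List.Sublist l es ∧ colE x y vs es = l.map (projD x y)
  | [], vs => ⟨[], List.nil_sublist _, by
      cases vs with
      | nil => rfl
      | cons o vs => cases o <;> rfl⟩
  | ε :: es, [] => ⟨[], List.nil_sublist _, rfl⟩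
  | ε :: es, none :: vs => by
    obtain ⟨l, hl, he⟩ := col_sublist es vs
    exact ⟨l, hl.cons ε, he⟩
  | ε :: es, some u :: vs => by
    obtain ⟨l, hl, he⟩ := col_sublist es vs
    exact ⟨ε :: l, hl.cons₂ ε, by rw [List.map_cons, ← he]; rfl⟩

lemma none_not_mem_map_some (σ : Sym2 A.V) :
    ¬ (none : Option A.V) ∈ σ.map some := by
  intro h
  rw [Sym2.mem_map] at h
  obtain ⟨a, _, ha⟩ := h
  exact Option.some_ne_none a ha

lemma col_okl : ∀ (es : List (A.msubdiv x y).E) (vs : List (Option A.V)),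
    Okl (A.msubdiv x y) vs es → vs.Nodup →
    vs.head? ≠ some none → vs.getLast? ≠ some none →
    Okl A (colV vs) (colE x y vs es)
  | [], [some u], _, _, _, _ => by rw [colV_some]; trivial
  | [], [none], _, _, _, hl => absurd rfl hl
  | _ :: _, none :: _, _, _, hh, _ => absurd rfl hh
  | [ε], some u :: none :: vs, hok, hnd, hh, hl => by
    cases vs with
    | nil => exact absurd rfl hl
    | cons o vs => exact hok.2.elim
  | ε₁ :: ε₂ :: es, some u :: none :: vs, hok, hnd, hh, hl => by
    cases vs with
    | nil => exact hok.2.elim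
    | cons o vs =>
      cases o with
      | none =>
        exfalso
        have h2 := (List.nodup_cons.1 hnd).2
        exact (List.nodup_cons.1 h2).1 (List.mem_cons_self)
      | some w =>
        have huw : u ≠ w := by
          intro h
          exact (List.nodup_cons.1 hnd).1
            (by rw [h]; exact List.mem_cons_of_mem _ (List.mem_cons_self))
        have h1 : (A.msubdiv x y).ends ε₁ = s(some u, none) := hok.1
        have h2 : (A.msubdiv x y).ends ε₂ = s(none, some w) := hok.2.1
        have hpr : A.ends (projD x y ε₁) = s(u, w) := by
          match ε₁ with
          | Sum.inl eh =>
            exfalso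
            refine none_not_mem_map_some (A.ends eh.1) ?_
            rw [← D_ends_inl x y eh, h1]
            simp
          | Sum.inr (eh, true) =>
            have h1' : s(some x, (none : Option A.V)) = s(some u, none) :=
              (D_ends_tt x y eh) ▸ h1
            rw [Sym2.eq_iff] at h1'
            have hux : x = u := by
              rcases h1' with ⟨ha, _⟩ | ⟨ha, hb⟩
              · exact Option.some_injective _ ha
              · exact absurd ha (by simp)
            match ε₂ with
            | Sum.inl fh =>
              exfalso
              refine none_not_mem_map_some (A.ends fh.1) ?_
              rw [← D_ends_inl x y fh, h2]
              simp
            | Sum.inr (fh, true) =>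
              exfalso
              have h2' : s(some x, (none : Option A.V)) = s(none, some w) :=
                (D_ends_tt x y fh) ▸ h2
              rw [Sym2.eq_iff] at h2'
              rcases h2' with ⟨ha, _⟩ | ⟨ha, _⟩
              · exact Option.some_ne_none x ha
              · exact huw (by rw [← hux]; exact Option.some_injective _ ha)
            | Sum.inr (fh, false) =>
              have h2' : s((none : Option A.V), some y) = s(none, some w) :=
                (D_ends_ff x y fh) ▸ h2
              rw [Sym2.eq_iff] at h2'
              have hwy : y = w := by
                rcases h2' with ⟨_, hb⟩ | ⟨ha, _⟩
                · exact Option.some_injective _ hb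
                · exact absurd ha (by simp)
              show A.ends eh.1 = s(u, w)
              rw [eh.2, hux, hwy]
          | Sum.inr (eh, false) =>
            have h1' : s((none : Option A.V), some y) = s(some u, none) :=
              (D_ends_ff x y eh) ▸ h1
            rw [Sym2.eq_iff] at h1'
            have huy : y = u := by
              rcases h1' with ⟨ha, _⟩ | ⟨_, hb⟩
              · exact absurd ha (by simp)
              · exact Option.some_injective _ hb
            match ε₂ with
            | Sum.inl fh =>
              exfalso
              refine none_not_mem_map_some (A.ends fh.1) ?_
              rw [← D_ends_inl x y fh, h2]
              simp
            | Sum.inr (fh, false) =>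
              exfalso
              have h2' : s((none : Option A.V), some y) = s(none, some w) :=
                (D_ends_ff x y fh) ▸ h2
              rw [Sym2.eq_iff] at h2'
              rcases h2' with ⟨_, hb⟩ | ⟨ha, _⟩
              · exact huw (by rw [← huy]; exact Option.some_injective _ hb)
              · exact absurd ha (by simp)
            | Sum.inr (fh, true) =>
              have h2' : s(some x, (none : Option A.V)) = s(none, some w) :=
                (D_ends_tt x y fh) ▸ h2
              rw [Sym2.eq_iff] at h2'
              have hwx : x = w := by
                rcases h2' with ⟨ha, _⟩ | ⟨ha, _⟩
                · exact absurd ha (by simp)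
                · exact Option.some_injective _ ha
              show A.ends eh.1 = s(u, w)
              rw [eh.2, hwx, huy]
              exact Sym2.eq_swap
        rw [colV_some, colV_none, colV_some]
        show Okl A (u :: w :: colV vs) (projD x y ε₁ :: colE x y (some w :: vs) es)
        refine ⟨hpr, ?_⟩
        have ih := col_okl es (some w :: vs) hok.2.2
          ((List.nodup_cons.1 (List.nodup_cons.1 hnd).2).2)
          (by simp)
          (by
            rw [List.getLast?_cons_cons, List.getLast?_cons_cons] at hl
            exact hl)
        rwa [colV_some] at ih
  | ε :: es, some u :: some w :: vs, hok, hnd, hh, hl => by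
    have h1 : (A.msubdiv x y).ends ε = s(some u, some w) := hok.1
    have hpr : A.ends (projD x y ε) = s(u, w) := by
      match ε with
      | Sum.inl eh =>
        have h1' : (A.ends eh.1).map some = s(some u, some w) := (D_ends_inl x y eh) ▸ h1
        have : (A.ends eh.1).map some = (s(u, w) : Sym2 A.V).map some := by
          rw [h1', Sym2.map_pair_eq]
        exact sym2_map_inj (Option.some_injective _) this
      | Sum.inr (eh, true) =>
        exfalso
        have h1' : s(some x, (none : Option A.V)) = s(some u, some w) :=
          (D_ends_tt x y eh) ▸ h1
        rw [Sym2.eq_iff] at h1'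
        rcases h1' with ⟨_, hb⟩ | ⟨_, hb⟩
        · cases hb
        · cases hb
      | Sum.inr (eh, false) =>
        exfalso
        have h1' : s((none : Option A.V), some y) = s(some u, some w) :=
          (D_ends_ff x y eh) ▸ h1
        rw [Sym2.eq_iff] at h1'
        rcases h1' with ⟨ha, _⟩ | ⟨ha, _⟩
        · cases ha
        · cases ha
    rw [colV_some, colV_some]
    show Okl A (u :: w :: colV vs) (projD x y ε :: colE x y (some w :: vs) es)
    refine ⟨hpr, ?_⟩
    have ih := col_okl es (some w :: vs) hok.2 (List.nodup_cons.1 hnd).2 (by simp)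
      (by rw [List.getLast?_cons_cons] at hl; exact hl)
    rwa [colV_some] at ih
  | [], [], h, _, _, _ => h.elim
  | [], _ :: _ :: _, h, _, _, _ => h.elim
  | _ :: _, [], h, _, _, _ => h.elim
  | _ :: _, [some u], h, _, _, _ => h.elim

lemma col_head {α : Type} (vs : List (Option α)) (u : α) (h : vs.head? = some (some u)) :
    (colV vs).head? = some u := by
  cases vs with
  | nil => simp at h
  | cons o vs =>
    have : o = some u := by simpa using h
    subst this
    rw [colV_some]
    rfl

lemma colV_ne_nil {α : Type} (vs : List (Option α)) (w : α)
    (h : vs.getLast? = some (some w)) : colV vs ≠ [] := by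
  have hmem : some w ∈ vs := List.mem_of_getLast? h
  have : w ∈ colV vs := by
    rw [colV, List.mem_filterMap]
    exact ⟨some w, hmem, rfl⟩
  exact List.ne_nil_of_mem this

lemma col_last {α : Type} : ∀ (vs : List (Option α)) (w : α),
    vs.getLast? = some (some w) → (colV vs).getLast? = some w
  | [], w => by simp
  | [o], w => by
    intro h
    simp only [List.getLast?_singleton, Option.some_inj] at h
    subst h
    rw [colV_some]
    rfl
  | o :: v :: vs, w => by
    intro h
    rw [List.getLast?_cons_cons] at h
    have ih := col_last (v :: vs) w h
    cases o with
    | none => rw [colV_none]; exact ih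
    | some u =>
      rw [colV_some]
      have hne := colV_ne_nil (v :: vs) w h
      cases hcv : colV (v :: vs) with
      | nil => exact absurd hcv hne
      | cons b t =>
        rw [hcv] at ih
        rw [List.getLast?_cons_cons]
        exact ih

lemma col_nodup {vs : List (Option A.V)} (hnd : vs.Nodup) : (colV vs).Nodup :=
  hnd.filterMap (fun a a' b hb hb' => by
    have h1 : a = some b := hb
    have h2 : a' = some b := hb'
    rw [h1, h2])

lemma col_chain (es : List (A.msubdiv x y).E) (vs : List (Option A.V))
    (hch : List.Chain' (· ≤ ·) (es.map (fun ε => lamA (projD x y ε)))) :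
    List.Chain' (· ≤ ·) ((colE x y vs es).map lamA) := by
  obtain ⟨l, hl, he⟩ := col_sublist (x := x) (y := y) es vs
  rw [he, List.map_map]
  exact hch.sublist (hl.map _)

lemma col_times (es : List (A.msubdiv x y).E) (vs : List (Option A.V)) (t : ℕ)
    (h : ∃ e ∈ colE x y vs es, lamA e = t) :
    ∃ ε ∈ es, lamA (projD x y ε) = t := by
  obtain ⟨e, he, rfl⟩ := h
  obtain ⟨l, hl, hEq⟩ := col_sublist (x := x) (y := y) es vs
  rw [hEq, List.mem_map] at he
  obtain ⟨ε, hε, rfl⟩ := he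
  exact ⟨ε, hl.subset hε, rfl⟩

end Collapse
section MengSubdiv

variable {A : Multigraph}

def spliceT (x y : A.V) (lamA : A.E → ℕ) {s z : A.V} (P : TPath A lamA s z) :
    TPath (A.msubdiv x y) (fun ε => lamA (projD x y ε)) (some s) (some z) :=
  mkT (spV x y P.verts P.edges) (spE x y P.verts P.edges)
    (sp_okl P.edges P.verts P.ok P.nodup)
    (by rw [sp_head, P.head_eq]; rfl)
    (by rw [sp_last P.edges P.verts P.ok, P.last_eq]; rfl)
    (sp_nodup P.edges P.verts P.nodup)
    (sp_chain P.edges P.verts P.ok P.mono)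

lemma spliceT_times (x y : A.V) (lamA : A.E → ℕ) {s z : A.V} (P : TPath A lamA s z) :
    (spliceT x y lamA P).times = P.times := by
  ext t
  exact sp_times P.edges P.verts P.ok t

def collapseT (x y : A.V) (lamA : A.E → ℕ) {s z : A.V}
    (P : TPath (A.msubdiv x y) (fun ε => lamA (projD x y ε)) (some s) (some z)) :
    TPath A lamA s z :=
  mkT (colV P.verts) (colE x y P.verts P.edges)
    (col_okl P.edges P.verts P.ok P.nodup (by rw [P.head_eq]; simp) (by rw [P.last_eq]; simp))
    (col_head P.verts s P.head_eq)
    (col_last P.verts z P.last_eq)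
    (col_nodup P.nodup)
    (col_chain P.edges P.verts P.mono)

lemma collapseT_times (x y : A.V) (lamA : A.E → ℕ) {s z : A.V}
    (P : TPath (A.msubdiv x y) (fun ε => lamA (projD x y ε)) (some s) (some z)) :
    (collapseT x y lamA P).times ⊆ P.times := by
  intro t ht
  exact col_times P.edges P.verts t ht

lemma inter_empty_of_subsets {S T S' T' : Set ℕ} (hS : S' ⊆ S) (hT : T' ⊆ T)
    (h : S ∩ T = ∅) : S' ∩ T' = ∅ := by
  rw [Set.eq_empty_iff_forall_notMem] at h ⊢
  rintro t ⟨h1, h2⟩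
  exact h t ⟨hS h1, hT h2⟩

lemma meng_subdiv (x y : A.V) (hedge : ∃ e, A.ends e = s(x, y))
    (hD : Mengerian (A.msubdiv x y)) : Mengerian A := by
  obtain ⟨e0, he0⟩ := hedge
  have hxy : x ≠ y := by
    have := A.loopless e0
    rw [he0] at this
    intro hh
    exact this (by rw [hh]; exact Sym2.mk_isDiag_iff.2 rfl)
  intro lamA hproper s z hsz
  have hproperD : ProperTime (A.msubdiv x y) (fun ε => lamA (projD x y ε)) := by
    constructor
    · intro ε; exact hproper.1 _
    · rintro ε ε' hne hEq
      rcases ε with e | ⟨e, b⟩ <;> rcases ε' with f | ⟨f, b'⟩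
      · have h1 : (A.ends e.1).map some = (A.ends f.1).map some := hEq
        have h2 : A.ends e.1 = A.ends f.1 := sym2_map_inj (Option.some_injective _) h1
        exact hproper.2 e.1 f.1 (fun h => hne (by rw [show e = f from Subtype.ext h])) h2
      · exfalso
        cases b'
        · have h1 : (A.ends e.1).map some = s((none : Option A.V), some y) := hEq
          exact none_not_mem_map_some (A.ends e.1) (by rw [h1]; simp)
        · have h1 : (A.ends e.1).map some = s(some x, (none : Option A.V)) := hEq
          exact none_not_mem_map_some (A.ends e.1) (by rw [h1]; simp)
      · exfalso
        cases b
        · have h1 : (A.ends f.1).map some = s((none : Option A.V), some y) := hEq.symm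
          exact none_not_mem_map_some (A.ends f.1) (by rw [h1]; simp)
        · have h1 : (A.ends f.1).map some = s(some x, (none : Option A.V)) := hEq.symm
          exact none_not_mem_map_some (A.ends f.1) (by rw [h1]; simp)
      · cases b <;> cases b'
        · have hef : e ≠ f := fun h => hne (by rw [h])
          exact hproper.2 e.1 f.1 (fun h => hef (Subtype.ext h)) (by rw [e.2, f.2])
        · exfalso
          have h1 : s((none : Option A.V), some y) = s(some x, (none : Option A.V)) := hEq
          rw [Sym2.eq_iff] at h1
          rcases h1 with ⟨ha, _⟩ | ⟨_, hb⟩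
          · cases ha
          · exact hxy (Option.some_injective _ hb.symm)
        · exfalso
          have h1 : s(some x, (none : Option A.V)) = s((none : Option A.V), some y) := hEq
          rw [Sym2.eq_iff] at h1
          rcases h1 with ⟨ha, _⟩ | ⟨ha, _⟩
          · cases ha
          · exact hxy (Option.some_injective _ ha)
        · have hef : e ≠ f := fun h => hne (by rw [h])
          exact hproper.2 e.1 f.1 (fun h => hef (Subtype.ext h)) (by rw [e.2, f.2])
  have hszD : (some s : Option A.V) ≠ some z := fun h => hsz (Option.some_injective _ h)
  have hmain := hD _ hproperD (some s) (some z) hszD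
  have e1 : maxD A lamA s z
      = maxD (A.msubdiv x y) (fun ε => lamA (projD x y ε)) (some s) (some z) := by
    apply _root_.le_antisymm
    · refine maxD_le_maxD hszD (spliceT x y lamA) (fun P Q h => ?_)
      rw [spliceT_times, spliceT_times]; exact h
    · refine maxD_le_maxD hsz (collapseT x y lamA) (fun P Q h => ?_)
      exact inter_empty_of_subsets (collapseT_times _ _ _ _) (collapseT_times _ _ _ _) h
  have e2 : minC A lamA s z
      = minC (A.msubdiv x y) (fun ε => lamA (projD x y ε)) (some s) (some z) := by
    apply _root_.le_antisymm
    · refine minC_le_minC hszD (cut_pullback (spliceT x y lamA) id ?_)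
      intro P t ht; rw [spliceT_times] at ht; exact ht
    · refine minC_le_minC hsz (cut_pullback (collapseT x y lamA) id ?_)
      intro P t ht; exact collapseT_times _ _ _ _ ht
  rw [e1, e2, hmain]

end MengSubdiv

lemma meng_substep {A B : Multigraph} (hstep : SubdivStep A B) (hB : Mengerian B) :
    Mengerian A := by
  obtain ⟨x, y, hedge, hiso⟩ := hstep
  exact meng_subdiv x y hedge (meng_of_miso hiso hB)

lemma meng_chain {H : Multigraph} :
    ∀ K : Multigraph, Relation.ReflTransGen SubdivStep H K → Mengerian K → Mengerian H := by
  intro K h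
  induction h with
  | refl => exact id
  | tail hab hstep ih => intro hc; exact ih (meng_substep hstep hc)
end TProof

/-- if `H` is not Mengerian for time and `H` is an m-topological minor of `G`,
then `G` is not Mengerian for time. -/
theorem stmt4 (H G : Multigraph) (hH : ¬ Mengerian H) (hminor : IsMTopMinor H G) :
    ¬ Mengerian G := by
  intro hG
  apply hH
  obtain ⟨K, hchain, hsub⟩ := hminor
  exact TProof.meng_chain K hchain (TProof.meng_subgraph hsub hG)
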